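/- Let t be a Kashiwara–Nakashima one-column tableau of type B_n of height r (r < n) with entries from {1,…,n, 0, n̄,…,1̄}, satisfying the one-column condition. With t_+, t_− its sets of unbarred/barred nonzero letters, K := t_+ ∩ t_−, k_0 the number of 0's, J_0 the lexicographically maximal k_0-subset of ({1,…,n} \ (t_+ ∪ t_−)), and J the lexicographically maximal |K|-subset of ({1,…,n} \ (t_+ ∪ t_− ∪ J_0)) all of whose elements are smaller than the corresponding elements of K. Then the sets v_+ := t_+ \ K, v_- := t_- \ K, K, J_0, J are pairwise disjoint, and |v_+| + |v_-| + 2|K| + |J_0| ≤ r together with |v_+| + |v_-| + 2|K| + k_0 = r. -/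

import Mathlib

theorem aux_sort_get_lt (s : Finset ℕ) (a i : ℕ) (hi : i < (s.sort (· ≤ ·)).length)
    (h : i < (s.filter (· < a)).card) : (s.sort (· ≤ ·)).get ⟨i, hi⟩ < a := by
  by_contra hc
  push_neg at hc
  simp only [List.get_eq_getElem] at hc
  have key : (s.filter (· < a)).card ≤ (Finset.range i).card := by
    apply Finset.card_le_card_of_injOn (fun x => (s.sort (· ≤ ·)).idxOf x)
    · intro x hx
      simp only [Finset.mem_coe, Finset.mem_filter] at hx
      have hxl : x ∈ s.sort (· ≤ ·) := (Finset.mem_sort _).2 hx.1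
      have hidx : (s.sort (· ≤ ·)).idxOf x < (s.sort (· ≤ ·)).length :=
        List.idxOf_lt_length_iff.2 hxl
      have hget : (s.sort (· ≤ ·))[((s.sort (· ≤ ·)).idxOf x)] = x :=
        List.getElem_idxOf hidx
      simp only [Finset.mem_coe, Finset.mem_range]
      by_contra hni
      push_neg at hni
      have h2 : (s.sort (· ≤ ·)).get ⟨i, hi⟩ ≤ (s.sort (· ≤ ·)).get ⟨_, hidx⟩ :=
        (Finset.pairwise_sort s (· ≤ ·)).rel_get_of_le (by exact hni)
      simp only [List.get_eq_getElem] at h2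
      rw [hget] at h2
      omega
    · intro x hx y hy hxy
      simp only [Finset.mem_coe, Finset.mem_filter] at hx hy
      have hxl : x ∈ s.sort (· ≤ ·) := (Finset.mem_sort _).2 hx.1
      have hyl : y ∈ s.sort (· ≤ ·) := (Finset.mem_sort _).2 hy.1
      rw [← List.getElem_idxOf (List.idxOf_lt_length_iff.2 hxl),
          ← List.getElem_idxOf (List.idxOf_lt_length_iff.2 hyl)]
      congr 1
  simp only [Finset.card_range] at key
  omega

/-- Let `t` be a type `Bₙ` Kashiwara–Nakashima one-column tableau of height
`r < n`, described by its set `tp` of unbarred nonzero letters, its set `tm`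
of barred nonzero letters (both subsets of `{1,…,n}`) and the number `k0` of
`0`'s, so that `|tp| + |tm| + k0 = r`.  The one-column condition states that if
a letter `a` appears both barred and unbarred, with `a` at position `p` from
the bottom and `ā` at position `q` from the top, then `p + q ≤ a`; here
`p = #{b ∈ tp : b ≤ a}` and `q = #{b ∈ tm : b ≤ a}`.

With `K := tp ∩ tm`, there exist sets `J0` (of cardinality `k0`, inside the
complement of `tp ∪ tm` in `{1,…,n}`; the lexicographically maximal such choice
works) and `J` (of cardinality `|K|`, inside the complement of `tp ∪ tm ∪ J0`,
all of whose elements are smaller than the corresponding elements of `K` when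
both are sorted increasingly) — i.e. `J` is well-defined — such that the sets
`v₊ := tp \ K`, `v₋ := tm \ K`, `K`, `J0`, `J` are pairwise disjoint, and
`|v₊| + |v₋| + 2|K| + |J0| ≤ r` together with `|v₊| + |v₋| + 2|K| + k0 = r`. -/
theorem pm_diagram_data_exists (n r : ℕ) (hr : r < n)
    (tp tm : Finset ℕ) (htp : tp ⊆ Finset.Icc 1 n) (htm : tm ⊆ Finset.Icc 1 n)
    (k0 : ℕ) (hheight : tp.card + tm.card + k0 = r)
    (hcol : ∀ a ∈ tp ∩ tm,
      (tp.filter (· ≤ a)).card + (tm.filter (· ≤ a)).card ≤ a) :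
    ∃ J0 J : Finset ℕ,
      J0 ⊆ Finset.Icc 1 n \ (tp ∪ tm) ∧ J0.card = k0 ∧
      J ⊆ Finset.Icc 1 n \ (tp ∪ tm ∪ J0) ∧ J.card = (tp ∩ tm).card ∧
      List.Forall₂ (· < ·) (J.sort (· ≤ ·)) ((tp ∩ tm).sort (· ≤ ·)) ∧
      List.Pairwise Disjoint [tp \ tm, tm \ tp, tp ∩ tm, J0, J] ∧
      (tp \ tm).card + (tm \ tp).card + 2 * (tp ∩ tm).card + J0.card ≤ r ∧
      (tp \ tm).card + (tm \ tp).card + 2 * (tp ∩ tm).card + k0 = r := by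
  classical
  set K : Finset ℕ := tp ∩ tm with hKdef
  set C : Finset ℕ := Finset.Icc 1 n \ (tp ∪ tm) with hCdef
  set k : ℕ := K.card with hkdef
  have hSsub : tp ∪ tm ⊆ Finset.Icc 1 n := Finset.union_subset htp htm
  have hSK : (tp ∪ tm).card + k = tp.card + tm.card := Finset.card_union_add_card_inter tp tm
  have hSle : (tp ∪ tm).card ≤ n := by
    have := Finset.card_le_card hSsub
    simpa [Nat.card_Icc] using this
  have hCcard : C.card = n - (tp ∪ tm).card := by
    rw [hCdef, Finset.card_sdiff_of_subset hSsub, Nat.card_Icc]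
    omega
  have hbig : k + k0 < C.card := by omega
  set l : List ℕ := C.sort (· ≤ ·) with hldef
  have hlen : l.length = C.card := Finset.length_sort _
  have hnd : l.Nodup := Finset.sort_nodup _ _
  set m : ℕ := l.length - k0 with hmdef
  have hkm : k ≤ m := by omega
  -- basic facts about the take/drop pieces
  have hndt : (l.take k).Nodup := hnd.sublist (List.take_sublist _ _)
  have hndd : (l.drop m).Nodup := hnd.sublist (List.drop_sublist _ _)
  have hJs : ∀ x ∈ (l.take k).toFinset, x ∈ C := by
    intro x hx
    rw [List.mem_toFinset] at hx
    exact (Finset.mem_sort _).1 ((List.take_sublist _ _).mem hx)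
  have hJ0s : ∀ x ∈ (l.drop m).toFinset, x ∈ C := by
    intro x hx
    rw [List.mem_toFinset] at hx
    exact (Finset.mem_sort _).1 ((List.drop_sublist _ _).mem hx)
  have hCdisj : Disjoint C (tp ∪ tm) := Finset.sdiff_disjoint
  have hJJ0 : Disjoint ((l.take k).toFinset) ((l.drop m).toFinset) := by
    rw [Finset.disjoint_left]
    intro x hx hx0
    rw [List.mem_toFinset] at hx hx0
    have hxm : x ∈ l.take m := by
      rw [List.mem_take_iff_getElem] at hx ⊢
      obtain ⟨j, hj, hjx⟩ := hx
      refine ⟨j, ?_, hjx⟩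
      simp only [lt_min_iff] at hj ⊢
      omega
    have : (l.take m ++ l.drop m).Nodup := by rw [List.take_append_drop]; exact hnd
    exact (List.nodup_append.mp this).2.2 x hxm x hx0 rfl
  have hJcard : ((l.take k).toFinset).card = k := by
    rw [List.toFinset_card_of_nodup hndt, List.length_take]
    omega
  have hJ0card : ((l.drop m).toFinset).card = k0 := by
    rw [List.toFinset_card_of_nodup hndd, List.length_drop]
    omega
  -- the sorted list of J is l.take k
  have hJsort : ((l.take k).toFinset).sort (· ≤ ·) = l.take k := by
    rw [List.toFinset_sort]
    · exact List.Pairwise.sublist (List.take_sublist _ _) (Finset.pairwise_sort C (· ≤ ·))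
    · exact hndt
  have hKlen : (K.sort (· ≤ ·)).length = k := Finset.length_sort _
  -- the key Forall₂ statement
  have hforall : List.Forall₂ (· < ·) (((l.take k).toFinset).sort (· ≤ ·)) (K.sort (· ≤ ·)) := by
    rw [List.forall₂_iff_get]
    constructor
    · rw [hJsort, List.length_take]; omega
    · intro i h₁ h₂
      rw [hJsort] at h₁
      have hik : i < k := by rw [List.length_take] at h₁; omega
      have hil : i < l.length := by omega
      set a : ℕ := (K.sort (· ≤ ·)).get ⟨i, h₂⟩ with hadef
      have haK : a ∈ K := (Finset.mem_sort _).1 (List.get_mem _ _)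
      have haIcc : a ∈ Finset.Icc 1 n := htp (Finset.mem_of_mem_inter_left haK)
      have han : a ≤ n := (Finset.mem_Icc.mp haIcc).2
      -- at least i+1 elements of K are ≤ a
      have hKcount : i + 1 ≤ (K.filter (· ≤ a)).card := by
        have hsub : (((K.sort (· ≤ ·)).take (i+1)).toFinset) ⊆ K.filter (· ≤ a) := by
          intro x hx
          rw [List.mem_toFinset, List.mem_take_iff_getElem] at hx
          obtain ⟨j, hj, hjx⟩ := hx
          have hjlen : j < (K.sort (· ≤ ·)).length := by
            simp only [lt_min_iff] at hj; exact hj.2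
          have hji : j ≤ i := by simp only [lt_min_iff] at hj; omega
          have hle : (K.sort (· ≤ ·)).get ⟨j, hjlen⟩ ≤ (K.sort (· ≤ ·)).get ⟨i, h₂⟩ :=
            (Finset.pairwise_sort K (· ≤ ·)).rel_get_of_le (by exact hji)
          simp only [List.get_eq_getElem] at hle
          rw [hjx] at hle
          rw [Finset.mem_filter]
          exact ⟨(Finset.mem_sort _).1 (hjx ▸ List.getElem_mem _), hle⟩
        have hcard : (((K.sort (· ≤ ·)).take (i+1)).toFinset).card = i + 1 := by
          rw [List.toFinset_card_of_nodup ((Finset.sort_nodup _ _).sublist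
            (List.take_sublist _ _)), List.length_take]
          omega
        calc i + 1 = _ := hcard.symm
          _ ≤ _ := Finset.card_le_card hsub
      -- counting: at least i+1 elements of C are < a
      have h1a : ∀ x ∈ tp ∪ tm, 1 ≤ x := fun x hx => (Finset.mem_Icc.mp (hSsub hx)).1
      have e1 : Finset.Icc 1 a ∩ tp = tp.filter (· ≤ a) := by
        ext x
        simp only [Finset.mem_inter, Finset.mem_Icc, Finset.mem_filter]
        exact ⟨fun h => ⟨h.2, h.1.2⟩,
          fun h => ⟨⟨h1a x (Finset.mem_union_left _ h.1), h.2⟩, h.1⟩⟩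
      have e2 : Finset.Icc 1 a ∩ tm = tm.filter (· ≤ a) := by
        ext x
        simp only [Finset.mem_inter, Finset.mem_Icc, Finset.mem_filter]
        exact ⟨fun h => ⟨h.2, h.1.2⟩,
          fun h => ⟨⟨h1a x (Finset.mem_union_right _ h.1), h.2⟩, h.1⟩⟩
      have e3 : Finset.Icc 1 a ∩ K = K.filter (· ≤ a) := by
        ext x
        simp only [Finset.mem_inter, Finset.mem_Icc, Finset.mem_filter]
        exact ⟨fun h => ⟨h.2, h.1.2⟩,
          fun h => ⟨⟨h1a x (Finset.mem_union_left _ (Finset.mem_of_mem_inter_left h.1)),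
            h.2⟩, h.1⟩⟩
      have einter : (Finset.Icc 1 a ∩ (tp ∪ tm)).card + (K.filter (· ≤ a)).card
          = (tp.filter (· ≤ a)).card + (tm.filter (· ≤ a)).card := by
        rw [Finset.inter_union_distrib_left, ← e1, ← e2, ← e3, hKdef,
          Finset.inter_inter_distrib_left]
        exact Finset.card_union_add_card_inter _ _
      have hcolla : (tp.filter (· ≤ a)).card + (tm.filter (· ≤ a)).card ≤ a :=
        hcol a haK
      have hsdiffcard : (Finset.Icc 1 a \ (tp ∪ tm)).card
          + (Finset.Icc 1 a ∩ (tp ∪ tm)).card = a := by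
        rw [Finset.card_sdiff_add_card_inter, Nat.card_Icc]
        omega
      have hsub2 : Finset.Icc 1 a \ (tp ∪ tm) ⊆ C.filter (· < a) := by
        intro x hx
        rw [Finset.mem_sdiff, Finset.mem_Icc] at hx
        have hxa : x ≠ a := by
          rintro rfl
          exact hx.2 (Finset.mem_union_left _ (Finset.mem_of_mem_inter_left haK))
        rw [Finset.mem_filter, hCdef, Finset.mem_sdiff, Finset.mem_Icc]
        exact ⟨⟨⟨hx.1.1, le_trans hx.1.2 han⟩, hx.2⟩, lt_of_le_of_ne hx.1.2 hxa⟩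
      have hCa : i < (C.filter (· < a)).card := by
        have h5 : (Finset.Icc 1 a \ (tp ∪ tm)).card ≤ (C.filter (· < a)).card :=
          Finset.card_le_card hsub2
        omega
      have hmain := aux_sort_get_lt C a i (by rw [← hldef]; omega) hCa
      simp only [List.get_eq_getElem, hldef] at hmain ⊢
      calc (((l.take k).toFinset).sort (· ≤ ·))[i] = (l.take k)[i]'h₁ :=
              List.getElem_of_eq hJsort _
        _ = l[i]'(by omega) := List.getElem_take
        _ < a := hmain
  refine ⟨(l.drop m).toFinset, (l.take k).toFinset, ?_, hJ0card, ?_, hJcard, hforall, ?_, ?_, ?_⟩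
  · intro x hx; exact hJ0s x hx
  · intro x hx
    have hxC := hJs x hx
    rw [hCdef, Finset.mem_sdiff] at hxC
    rw [Finset.mem_sdiff, Finset.mem_union]
    refine ⟨hxC.1, ?_⟩
    rintro (hS | hJ0)
    · exact hxC.2 hS
    · exact (Finset.disjoint_left.mp hJJ0) hx hJ0
  · -- pairwise disjointness
    have dJ0 : Disjoint ((l.drop m).toFinset) (tp ∪ tm) := by
      rw [Finset.disjoint_left]
      intro x hx hx'
      exact Finset.disjoint_left.mp hCdisj (hJ0s _ hx) hx'
    have dJ : Disjoint ((l.take k).toFinset) (tp ∪ tm) := by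
      rw [Finset.disjoint_left]
      intro x hx hx'
      exact Finset.disjoint_left.mp hCdisj (hJs _ hx) hx'
    have d12 : Disjoint (tp \ tm) (tm \ tp) := disjoint_sdiff_sdiff
    have d13 : Disjoint (tp \ tm) K := by
      rw [Finset.disjoint_left]
      intro x hx hx'
      exact (Finset.mem_sdiff.mp hx).2 (Finset.mem_of_mem_inter_right hx')
    have d23 : Disjoint (tm \ tp) K := by
      rw [Finset.disjoint_left]
      intro x hx hx'
      exact (Finset.mem_sdiff.mp hx).2 (Finset.mem_of_mem_inter_left hx')
    have d14 : Disjoint (tp \ tm) ((l.drop m).toFinset) := by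
      rw [Finset.disjoint_left]
      intro x hx hx'
      exact Finset.disjoint_left.mp dJ0 hx'
        (Finset.mem_union_left _ (Finset.mem_sdiff.mp hx).1)
    have d15 : Disjoint (tp \ tm) ((l.take k).toFinset) := by
      rw [Finset.disjoint_left]
      intro x hx hx'
      exact Finset.disjoint_left.mp dJ hx'
        (Finset.mem_union_left _ (Finset.mem_sdiff.mp hx).1)
    have d24 : Disjoint (tm \ tp) ((l.drop m).toFinset) := by
      rw [Finset.disjoint_left]
      intro x hx hx'
      exact Finset.disjoint_left.mp dJ0 hx'
        (Finset.mem_union_right _ (Finset.mem_sdiff.mp hx).1)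
    have d25 : Disjoint (tm \ tp) ((l.take k).toFinset) := by
      rw [Finset.disjoint_left]
      intro x hx hx'
      exact Finset.disjoint_left.mp dJ hx'
        (Finset.mem_union_right _ (Finset.mem_sdiff.mp hx).1)
    have d34 : Disjoint K ((l.drop m).toFinset) := by
      rw [Finset.disjoint_left]
      intro x hx hx'
      exact Finset.disjoint_left.mp dJ0 hx'
        (Finset.mem_union_left _ (Finset.mem_of_mem_inter_left hx))
    have d35 : Disjoint K ((l.take k).toFinset) := by
      rw [Finset.disjoint_left]
      intro x hx hx'
      exact Finset.disjoint_left.mp dJ hx'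
        (Finset.mem_union_left _ (Finset.mem_of_mem_inter_left hx))
    have d45 : Disjoint ((l.drop m).toFinset) ((l.take k).toFinset) := hJJ0.symm
    refine List.Pairwise.cons ?_ (List.Pairwise.cons ?_ (List.Pairwise.cons ?_
      (List.Pairwise.cons ?_ (List.Pairwise.cons ?_ List.Pairwise.nil))))
    · intro s hs
      simp only [List.mem_cons, List.not_mem_nil, or_false] at hs
      rcases hs with rfl | rfl | rfl | rfl
      exacts [d12, d13, d14, d15]
    · intro s hs
      simp only [List.mem_cons, List.not_mem_nil, or_false] at hs
      rcases hs with rfl | rfl | rfl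
      exacts [d23, d24, d25]
    · intro s hs
      simp only [List.mem_cons, List.not_mem_nil, or_false] at hs
      rcases hs with rfl | rfl
      exacts [d34, d35]
    · intro s hs
      simp only [List.mem_cons, List.not_mem_nil, or_false] at hs
      rcases hs with rfl
      exact d45
    · intro s hs
      simp at hs
  · -- cardinality inequality
    have c1 : (tp \ tm).card + k = tp.card := Finset.card_sdiff_add_card_inter tp tm
    have c2 : (tm \ tp).card + k = tm.card := by
      rw [hkdef, hKdef, Finset.inter_comm]
      exact Finset.card_sdiff_add_card_inter tm tp
    rw [hJ0card]
    omega
  · have c1 : (tp \ tm).card + k = tp.card := Finset.card_sdiff_add_card_inter tp tm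
    have c2 : (tm \ tp).card + k = tm.card := by
      rw [hkdef, hKdef, Finset.inter_comm]
      exact Finset.card_sdiff_add_card_inter tm tp
    omega
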